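/- Let N ≥ 3 be an odd integer. Let d ∈ [0,1] be an N-adic rational, let k be an odd integer, and let p ≥ 0 be an integer with d + k/N^p ∈ [0,1]. Then there is no f ∈ F(N) with f(d) = d + k/N^p. -/

import Mathlib

/-- A real number is an `N`-adic rational if it equals `k / N^m` for some `k : ℤ`, `m : ℕ`. -/
def IsNAdic (N : ℕ) (x : ℝ) : Prop :=
  ∃ (k : ℤ) (m : ℕ), x = (k : ℝ) / (N : ℝ) ^ m

/-- Membership (as a map of `[0,1]`) in the generalized Thompson group `F(N)`:
`f 0 = 0`, `f 1 = 1`, and there is a finite partition `0 = a 0 < a 1 < ⋯ < a n = 1`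
of `[0,1]` by `N`-adic rationals such that on each piece `[a i, a (i+1)]` the map `f`
is affine with slope an integer power of `N`.  (Such an `f` is automatically an
increasing piecewise-linear homeomorphism of `[0,1]` onto itself, with all
non-differentiability points `N`-adic.) -/
def InFN (N : ℕ) (f : ℝ → ℝ) : Prop :=
  f 0 = 0 ∧ f 1 = 1 ∧
    ∃ (n : ℕ) (a : ℕ → ℝ), 0 < n ∧ a 0 = 0 ∧ a n = 1 ∧
      (∀ i < n, a i < a (i + 1)) ∧
      (∀ i ≤ n, IsNAdic N (a i)) ∧
      (∀ i < n, ∃ q : ℤ, ∀ x ∈ Set.Icc (a i) (a (i + 1)),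
        f x = f (a i) + (N : ℝ) ^ q * (x - a i))

/-- An `N`-adic rational with even numerator. -/
def ENadic (N : ℕ) (x : ℝ) : Prop :=
  ∃ (j : ℤ) (m : ℕ), x = ((2 * j : ℤ) : ℝ) / (N : ℝ) ^ m

lemma ENadic_add {N : ℕ} (hN0 : (N : ℝ) ≠ 0) {x y : ℝ}
    (hx : ENadic N x) (hy : ENadic N y) : ENadic N (x + y) := by
  obtain ⟨a, m, rfl⟩ := hx
  obtain ⟨b, r, rfl⟩ := hy
  refine ⟨a * (N : ℤ) ^ r + b * (N : ℤ) ^ m, m + r, ?_⟩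
  have hm : ((N : ℝ)) ^ m ≠ 0 := pow_ne_zero _ hN0
  have hr : ((N : ℝ)) ^ r ≠ 0 := pow_ne_zero _ hN0
  field_simp
  push_cast
  ring

lemma IsNAdic_sub {N : ℕ} (hN0 : (N : ℝ) ≠ 0) {x y : ℝ}
    (hx : IsNAdic N x) (hy : IsNAdic N y) : IsNAdic N (x - y) := by
  obtain ⟨a, m, rfl⟩ := hx
  obtain ⟨b, r, rfl⟩ := hy
  refine ⟨a * (N : ℤ) ^ r - b * (N : ℤ) ^ m, m + r, ?_⟩
  have hm : ((N : ℝ)) ^ m ≠ 0 := pow_ne_zero _ hN0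
  have hr : ((N : ℝ)) ^ r ≠ 0 := pow_ne_zero _ hN0
  field_simp
  push_cast
  ring

/-- For `N` odd, `(N^q - 1) * t` has even numerator whenever `t` is `N`-adic. -/
lemma ENadic_slope {N : ℕ} (hNodd : Odd N) (hN0 : (N : ℝ) ≠ 0) (q : ℤ) {t : ℝ}
    (ht : IsNAdic N t) : ENadic N (((N : ℝ) ^ q - 1) * t) := by
  obtain ⟨c, m, rfl⟩ := ht
  obtain ⟨r, hq | hq⟩ := q.eq_nat_or_neg
  · obtain ⟨s, hs⟩ : Odd ((N : ℤ) ^ r) := hNodd.natCast.pow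
    have hNrval : ((N : ℝ)) ^ r = 2 * (s : ℝ) + 1 := by exact_mod_cast hs
    refine ⟨s * c, m, ?_⟩
    subst hq
    rw [zpow_natCast, hNrval]
    have hm : ((N : ℝ)) ^ m ≠ 0 := pow_ne_zero _ hN0
    field_simp
    push_cast
    ring
  · obtain ⟨s, hs⟩ : Odd ((N : ℤ) ^ r) := hNodd.natCast.pow
    have hNrval : ((N : ℝ)) ^ r = 2 * (s : ℝ) + 1 := by exact_mod_cast hs
    refine ⟨-(s * c), m + r, ?_⟩
    subst hq
    have hNr : ((N : ℝ)) ^ r ≠ 0 := pow_ne_zero _ hN0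
    have h2s : (2 * (s : ℝ) + 1) ≠ 0 := hNrval ▸ hNr
    have hm : ((N : ℝ)) ^ m ≠ 0 := pow_ne_zero _ hN0
    rw [zpow_neg, zpow_natCast, pow_add, hNrval]
    field_simp
    push_cast
    ring

theorem statement6 (N : ℕ) (hN : 3 ≤ N) (hNodd : Odd N)
    (d : ℝ) (hd : d ∈ Set.Icc (0 : ℝ) 1) (hdad : IsNAdic N d)
    (k : ℤ) (hk : Odd k) (p : ℕ)
    (hin : d + (k : ℝ) / (N : ℝ) ^ p ∈ Set.Icc (0 : ℝ) 1) :
    ¬ ∃ f : ℝ → ℝ, InFN N f ∧ f d = d + (k : ℝ) / (N : ℝ) ^ p := by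
  have hN0 : (N : ℝ) ≠ 0 := by positivity
  rintro ⟨f, ⟨hf0, hf1, n, a, hn, ha0, han, hmono, hadic, hslope⟩, hfd⟩
  -- Key invariant: f(a i) - a i has even numerator.
  have key : ∀ i ≤ n, ENadic N (f (a i) - a i) := by
    intro i
    induction i with
    | zero =>
      intro _
      rw [ha0, hf0]
      exact ⟨0, 0, by norm_num⟩
    | succ j ih =>
      intro hjn
      have hjlt : j < n := hjn
      obtain ⟨q, hq⟩ := hslope j hjlt
      have hval := hq _ ⟨le_of_lt (hmono j hjlt), le_refl _⟩
      have heq : f (a (j + 1)) - a (j + 1) =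
          (f (a j) - a j) + ((N : ℝ) ^ q - 1) * (a (j + 1) - a j) := by
        rw [hval]; ring
      rw [heq]
      exact ENadic_add hN0 (ih (le_of_lt hjlt))
        (ENadic_slope hNodd hN0 q
          (IsNAdic_sub hN0 (hadic _ hjn) (hadic _ (le_of_lt hjlt))))
  -- Find an interval containing d.
  classical
  have hex : ∃ i, d ≤ a (i + 1) := by
    refine ⟨n - 1, ?_⟩
    have hn1 : n - 1 + 1 = n := by omega
    rw [hn1, han]; exact hd.2
  obtain ⟨i, hdle, hmin⟩ : ∃ i, d ≤ a (i + 1) ∧ ∀ m < i, ¬ d ≤ a (m + 1) :=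
    ⟨Nat.find hex, Nat.find_spec hex, fun m hm => Nat.find_min hex hm⟩
  have hilt : i < n := by
    by_contra h
    push_neg at h
    refine hmin (n - 1) (by omega) ?_
    have hn1 : n - 1 + 1 = n := by omega
    rw [hn1, han]; exact hd.2
  have hge : a i ≤ d := by
    rcases Nat.eq_zero_or_pos i with h0 | hpos
    · rw [h0, ha0]; exact hd.1
    · have hlt := hmin (i - 1) (by omega)
      push_neg at hlt
      have h1 : i - 1 + 1 = i := by omega
      rw [h1] at hlt
      exact le_of_lt hlt
  obtain ⟨q, hq⟩ := hslope i hilt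
  have hval := hq d ⟨hge, hdle⟩
  have hEN : ENadic N (f d - d) := by
    have heq : f d - d = (f (a i) - a i) + ((N : ℝ) ^ q - 1) * (d - a i) := by
      rw [hval]; ring
    rw [heq]
    exact ENadic_add hN0 (key i (le_of_lt hilt))
      (ENadic_slope hNodd hN0 q (IsNAdic_sub hN0 hdad (hadic _ (le_of_lt hilt))))
  rw [hfd] at hEN
  have hEN' : ENadic N ((k : ℝ) / (N : ℝ) ^ p) := by
    have h : d + (k : ℝ) / (N : ℝ) ^ p - d = (k : ℝ) / (N : ℝ) ^ p := by ring
    rwa [h] at hEN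
  obtain ⟨j, m, hjm⟩ := hEN'
  have hp : ((N : ℝ)) ^ p ≠ 0 := pow_ne_zero _ hN0
  have hm : ((N : ℝ)) ^ m ≠ 0 := pow_ne_zero _ hN0
  have hreal : (k : ℝ) * (N : ℝ) ^ m = 2 * (j : ℝ) * (N : ℝ) ^ p := by
    field_simp at hjm
    push_cast at hjm
    linarith [hjm]
  have hint : k * (N : ℤ) ^ m = 2 * j * (N : ℤ) ^ p := by exact_mod_cast hreal
  have hodd : Odd (k * (N : ℤ) ^ m) := hk.mul hNodd.natCast.pow
  rw [hint] at hodd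
  exact (Int.not_odd_iff_even.mpr ⟨j * (N : ℤ) ^ p, by ring⟩) hodd
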